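/- Let u ∈ ℝ^n satisfy u_j > 0 for all j and ∑_{j=1}^n u_j = n. If ‖u − e‖_∞ ≤ 1/4 then δ(u) ≥ (1/(6n))·‖u − e‖₂²; if ‖u − e‖_∞ ≤ 1/10 then δ(u) ≥ (7/(18n))·‖u − e‖₂². -/

import Mathlib

/-- The entropy proximity measure `δ(u) = (1/n) ∑ u_j ln u_j`. -/
noncomputable def entropyDelta (n : ℕ) (u : Fin n → ℝ) : ℝ :=
  (1 / (n : ℝ)) * ∑ j, u j * Real.log (u j)

/-- Padé lower bound: for `x ≥ 1`, `2 - 4/(x+1) = 2(x-1)/(x+1) ≤ log x`. -/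
lemma log_lower_aux {x : ℝ} (hx : 1 ≤ x) : 2 - 4 * (x + 1)⁻¹ ≤ Real.log x := by
  have key : MonotoneOn (fun y : ℝ => Real.log y + 4 * (y + 1)⁻¹) (Set.Ici 1) := by
    apply monotoneOn_of_hasDerivWithinAt_nonneg (f' := fun y => y⁻¹ - 4 * ((y + 1) ^ 2)⁻¹)
      (convex_Ici 1)
    · intro y hy
      have hy1 : (1 : ℝ) ≤ y := hy
      have : ContinuousAt (fun y : ℝ => Real.log y + 4 * (y + 1)⁻¹) y := by
        have h1 : ContinuousAt Real.log y := Real.continuousAt_log (by linarith)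
        have hne : (y : ℝ) + 1 ≠ 0 := by linarith
        have h2 : ContinuousAt (fun y : ℝ => 4 * (y + 1)⁻¹) y := by
          fun_prop (disch := assumption)
        exact h1.add h2
      exact this.continuousWithinAt
    · intro y hy
      rw [interior_Ici] at hy
      have hy1 : (1 : ℝ) < y := hy
      have hne : y ≠ 0 := by linarith
      have hne1 : y + 1 ≠ 0 := by linarith
      have hd : HasDerivAt (fun y : ℝ => Real.log y + 4 * (y + 1)⁻¹)
          (y⁻¹ - 4 * ((y + 1) ^ 2)⁻¹) y := by
        have h1 : HasDerivAt Real.log y⁻¹ y := Real.hasDerivAt_log hne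
        have h2 : HasDerivAt (fun y : ℝ => y + 1) 1 y := by
          simpa using (hasDerivAt_id y).add_const 1
        have h3 : HasDerivAt (fun y : ℝ => (y + 1)⁻¹) (-1 / (y + 1) ^ 2) y := by
          simpa [Pi.inv_def] using h2.inv hne1
        have h4 := h3.const_mul (4 : ℝ)
        have h5 := h1.add h4
        exact h5.congr_deriv (by ring)
      exact hd.hasDerivWithinAt
    · intro y hy
      rw [interior_Ici] at hy
      have hy1 : (1 : ℝ) < y := hy
      have h1 : (0:ℝ) < y := by linarith
      have h2 : (0:ℝ) < (y + 1) ^ 2 := by positivity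
      have e : y⁻¹ - 4 * ((y + 1) ^ 2)⁻¹ = (y - 1) ^ 2 / (y * (y + 1) ^ 2) := by
        field_simp
        ring
      rw [e]
      positivity
  have h := key Set.self_mem_Ici hx hx
  simp only [Real.log_one] at h
  norm_num at h
  linarith

/-- Padé upper bound: for `1 ≤ y`, `log y ≤ (y - y⁻¹)/2`. -/
lemma log_upper_aux {y : ℝ} (hy : 1 ≤ y) : Real.log y ≤ (y - y⁻¹) / 2 := by
  have key : MonotoneOn (fun z : ℝ => (z - z⁻¹) / 2 - Real.log z) (Set.Ici 1) := by
    apply monotoneOn_of_hasDerivWithinAt_nonneg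
      (f' := fun z => (1 + (z ^ 2)⁻¹) / 2 - z⁻¹) (convex_Ici 1)
    · intro z hz
      have hz1 : (1 : ℝ) ≤ z := hz
      have hne : z ≠ 0 := by linarith
      have : ContinuousAt (fun z : ℝ => (z - z⁻¹) / 2 - Real.log z) z := by
        have h1 : ContinuousAt Real.log z := Real.continuousAt_log hne
        have h2 : ContinuousAt (fun z : ℝ => (z - z⁻¹) / 2) z := by
          fun_prop (disch := assumption)
        exact h2.sub h1
      exact this.continuousWithinAt
    · intro z hz
      rw [interior_Ici] at hz
      have hz1 : (1 : ℝ) < z := hz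
      have hne : z ≠ 0 := by linarith
      have hd : HasDerivAt (fun z : ℝ => (z - z⁻¹) / 2 - Real.log z)
          ((1 + (z ^ 2)⁻¹) / 2 - z⁻¹) z := by
        have h1 : HasDerivAt Real.log z⁻¹ z := Real.hasDerivAt_log hne
        have h2 : HasDerivAt (fun z : ℝ => z⁻¹) (-1 / z ^ 2) z := by
          simpa [Pi.inv_def] using (hasDerivAt_id z).inv hne
        have h3 : HasDerivAt (fun z : ℝ => z - z⁻¹) (1 - -1 / z ^ 2) z :=
          (hasDerivAt_id z).sub h2
        have h4 := (h3.div_const 2).sub h1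
        exact h4.congr_deriv (by ring)
      exact hd.hasDerivWithinAt
    · intro z hz
      rw [interior_Ici] at hz
      have hz1 : (1 : ℝ) < z := hz
      have h1 : (0:ℝ) < z := by linarith
      have e : (1 + (z ^ 2)⁻¹) / 2 - z⁻¹ = (z - 1) ^ 2 / (2 * z ^ 2) := by
        field_simp
        ring
      rw [e]
      positivity
  have h := key Set.self_mem_Ici hy hy
  simp only [Real.log_one, inv_one] at h
  norm_num at h
  linarith

/-- Pointwise key inequality: for `0 < x ≤ 5/4`,
`(4/9)(x-1)² ≤ x log x - (x - 1)`. -/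
lemma key_pointwise {x : ℝ} (hx : 0 < x) (hx2 : x ≤ 5 / 4) :
    (4 / 9) * (x - 1) ^ 2 ≤ x * Real.log x - (x - 1) := by
  rcases le_or_gt 1 x with h1 | h1
  · have hlog := log_lower_aux h1
    have hxlog : x * (2 - 4 * (x + 1)⁻¹) ≤ x * Real.log x :=
      mul_le_mul_of_nonneg_left hlog (by linarith)
    have hne : x + 1 ≠ 0 := by linarith
    have hx1 : (0:ℝ) < x + 1 := by linarith
    have e : x * (2 - 4 * (x + 1)⁻¹) - (x - 1) = (x - 1) ^ 2 / (x + 1) := by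
      field_simp
      ring
    have h2 : (4 / 9) * (x - 1) ^ 2 ≤ (x - 1) ^ 2 / (x + 1) := by
      rw [le_div_iff₀ hx1]
      nlinarith [sq_nonneg (x - 1)]
    linarith
  · have hy : (1 : ℝ) ≤ x⁻¹ := by
      rw [show x⁻¹ = 1 / x by ring, le_div_iff₀ hx]
      linarith
    have hlog := log_upper_aux hy
    rw [Real.log_inv, inv_inv] at hlog
    have hlogx : (x - x⁻¹) / 2 ≤ Real.log x := by linarith
    have hxlog : x * ((x - x⁻¹) / 2) ≤ x * Real.log x :=
      mul_le_mul_of_nonneg_left hlogx (le_of_lt hx)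
    have hne : x ≠ 0 := ne_of_gt hx
    have e : x * ((x - x⁻¹) / 2) = (x ^ 2 - 1) / 2 := by
      field_simp
    rw [e] at hxlog
    nlinarith [sq_nonneg (x - 1)]

theorem stmt_3 (n : ℕ) (hn : 1 ≤ n) (u : Fin n → ℝ)
    (hu : ∀ j, 0 < u j) (hsum : ∑ j, u j = (n : ℝ)) :
    ((∀ j, |u j - 1| ≤ 1 / 4) →
      (1 / (6 * (n : ℝ))) * ∑ j, (u j - 1) ^ 2 ≤ entropyDelta n u) ∧
    ((∀ j, |u j - 1| ≤ 1 / 10) →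
      (7 / (18 * (n : ℝ))) * ∑ j, (u j - 1) ^ 2 ≤ entropyDelta n u) := by
  have hn0 : (0:ℝ) < (n : ℝ) := by exact_mod_cast hn
  have hS : (0:ℝ) ≤ ∑ j, (u j - 1) ^ 2 :=
    Finset.sum_nonneg fun j _ => sq_nonneg _
  have main : (∀ j, u j ≤ 5 / 4) →
      (4 / 9) * ∑ j, (u j - 1) ^ 2 ≤ ∑ j, u j * Real.log (u j) := by
    intro hb
    have hsum0 : ∑ j, (u j - 1) = 0 := by
      rw [Finset.sum_sub_distrib, hsum]
      simp
    calc (4 / 9) * ∑ j, (u j - 1) ^ 2 = ∑ j, (4 / 9) * (u j - 1) ^ 2 := by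
          rw [Finset.mul_sum]
      _ ≤ ∑ j, (u j * Real.log (u j) - (u j - 1)) :=
          Finset.sum_le_sum fun j _ => key_pointwise (hu j) (hb j)
      _ = ∑ j, u j * Real.log (u j) := by
          rw [Finset.sum_sub_distrib, hsum0, sub_zero]
  constructor
  · intro hb
    have H := main fun j => by
      have := (abs_le.mp (hb j)).2
      linarith
    rw [entropyDelta]
    have h2 : (1 / (n:ℝ)) * ((4 / 9) * ∑ j, (u j - 1) ^ 2) ≤
        (1 / (n:ℝ)) * ∑ j, u j * Real.log (u j) :=
      mul_le_mul_of_nonneg_left H (by positivity)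
    have h3 : 1 / (6 * (n:ℝ)) * ∑ j, (u j - 1) ^ 2 ≤
        (1 / (n:ℝ)) * ((4 / 9) * ∑ j, (u j - 1) ^ 2) := by
      rw [show (1:ℝ) / (n:ℝ) * ((4/9) * ∑ j, (u j - 1) ^ 2)
            = 4 / (9 * (n:ℝ)) * ∑ j, (u j - 1) ^ 2 by ring]
      apply mul_le_mul_of_nonneg_right _ hS
      rw [div_le_div_iff₀ (by positivity) (by positivity)]
      linarith
    linarith
  · intro hb
    have H := main fun j => by
      have := (abs_le.mp (hb j)).2
      linarith
    rw [entropyDelta]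
    have h2 : (1 / (n:ℝ)) * ((4 / 9) * ∑ j, (u j - 1) ^ 2) ≤
        (1 / (n:ℝ)) * ∑ j, u j * Real.log (u j) :=
      mul_le_mul_of_nonneg_left H (by positivity)
    have h3 : 7 / (18 * (n:ℝ)) * ∑ j, (u j - 1) ^ 2 ≤
        (1 / (n:ℝ)) * ((4 / 9) * ∑ j, (u j - 1) ^ 2) := by
      rw [show (1:ℝ) / (n:ℝ) * ((4/9) * ∑ j, (u j - 1) ^ 2)
            = 4 / (9 * (n:ℝ)) * ∑ j, (u j - 1) ^ 2 by ring]
      apply mul_le_mul_of_nonneg_right _ hS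
      rw [div_le_div_iff₀ (by positivity) (by positivity)]
      linarith
    linarith
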